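/- Let M ∈ ℝ^{n×n} and let W₁, W₂ ∈ ℝ^{n×r} have columns u₁,…,u_r and v₁,…,v_r respectively. Then (M + W₁W₂ᵀ)^{∘2} = M^{∘2} + Σ_{i=1}^{r} diag(u_i)·(2M + W₁W₂ᵀ)·diag(v_i). -/

import Mathlib

open Matrix

theorem stmt_2 {n r : ℕ} (M : Matrix (Fin n) (Fin n) ℝ) (W₁ W₂ : Matrix (Fin n) (Fin r) ℝ) :
    (M + W₁ * W₂ᵀ) ⊙ (M + W₁ * W₂ᵀ) =
      M ⊙ M + ∑ i : Fin r,
        Matrix.diagonal (fun j => W₁ j i) * ((2:ℝ) • M + W₁ * W₂ᵀ) *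
          Matrix.diagonal (fun j => W₂ j i) := by
  ext j k
  simp only [hadamard_apply, Matrix.add_apply, Matrix.sum_apply, mul_diagonal, diagonal_mul, Matrix.smul_apply,
    smul_eq_mul]
  simp only [mul_apply, transpose_apply]
  rw [show (∑ x : Fin r, W₁ j x * (2 * M j k + ∑ x : Fin r, W₁ j x * W₂ k x) * W₂ k x)
      = (2 * M j k + ∑ x : Fin r, W₁ j x * W₂ k x) * ∑ x : Fin r, W₁ j x * W₂ k x from by
    rw [Finset.mul_sum]; exact Finset.sum_congr rfl fun x _ => by ring]
  ring
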